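/- Let m ≥ 1 be fixed and n ≥ m. Let H be the random n×m Toeplitz matrix built from i.i.d. Rademacher inputs h_{-m+2},…,h_n. Fix z ∈ ℝ^m with ‖z‖₂ = 1 and set S = n·E|Σ_{i=1}^m z_i ε_i|, where ε₁,…,ε_m are i.i.d. Rademacher. Then for any ε > 0, with probability at least 1 − 2e^{−ε² n² / (2(n+m−1)m)}, one has S − εn ≤ ‖Hz‖₁ ≤ S + εn. -/

import Mathlib

open MeasureTheory ProbabilityTheory Finset Filter

noncomputable section

/-- The `n × m` Toeplitz matrix built from the input sequence
`h = (h_{-m+2}, …, h_n)`, reindexed as `h : Fin (n+m-1) → ℝ`;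
the `(i,j)` entry (0-based) is the input with index `i + j`, which corresponds to
`H_{i,j} = h_{i-m+j}` in 1-based indexing. -/
def toeplitz (n m : ℕ) (h : Fin (n + m - 1) → ℝ) : Matrix (Fin n) (Fin m) ℝ :=
  fun i j => h ⟨i.1 + j.1, by have := i.2; have := j.2; omega⟩

/-- The ℓ¹ norm of a vector in `ℝ^k`. -/
def l1 {k : ℕ} (v : Fin k → ℝ) : ℝ := ∑ i, |v i|

/-- The Euclidean (ℓ²) norm of a vector in `ℝ^k`. -/
def l2 {k : ℕ} (v : Fin k → ℝ) : ℝ := Real.sqrt (∑ i, (v i) ^ 2)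

/-- The Rademacher measure on ℝ: values `+1` and `-1` with probability `1/2` each. -/
def radMeasure : Measure ℝ :=
  (2 : ENNReal)⁻¹ • Measure.dirac 1 + (2 : ENNReal)⁻¹ • Measure.dirac (-1)

/-- Product of `d` i.i.d. Rademacher measures on `ℝ^d`. -/
def radPi (d : ℕ) : Measure (Fin d → ℝ) := Measure.pi fun _ => radMeasure

open Classical in
/-- Number of nonzero entries of a vector. -/
def sparsity {k : ℕ} (v : Fin k → ℝ) : ℕ := (Finset.univ.filter fun i => v i ≠ 0).card

def rsig {d : ℕ} (s : Fin d → Bool) : Fin d → ℝ := fun i => if s i then 1 else -1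

instance : IsProbabilityMeasure radMeasure := by
  constructor
  simp [radMeasure, ENNReal.inv_two_add_inv_two]

open Classical in
lemma radPi_eq (d : ℕ) :
    radPi d = ((2 : ENNReal) ^ d)⁻¹ • ∑ s : Fin d → Bool, Measure.dirac (rsig s) := by
  refine (Measure.pi_eq fun A hA => ?_)
  rw [Measure.smul_apply, Measure.finset_sum_apply]
  have h1 : ∀ s : Fin d → Bool, Measure.dirac (rsig s) (Set.pi Set.univ A)
      = if ∀ i, rsig s i ∈ A i then 1 else 0 := by
    intro s
    rw [Measure.dirac_apply' _ (MeasurableSet.univ_pi hA)]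
    simp [Set.indicator_apply, Set.mem_univ_pi]
  simp_rw [h1]
  have h2 : ∀ s : Fin d → Bool, (if ∀ i, rsig s i ∈ A i then (1:ENNReal) else 0)
      = ∏ i, (if rsig s i ∈ A i then (1:ENNReal) else 0) := by
    intro s; rw [Finset.prod_boole]; simp
  simp_rw [h2]
  have h4 := Fintype.prod_sum (f := fun i (b : Bool) => if (if b then (1:ℝ) else -1) ∈ A i then (1:ENNReal) else 0)
  have h3 : ∀ i, radMeasure (A i)
      = 2⁻¹ * ∑ b : Bool, (if (if b then (1:ℝ) else -1) ∈ A i then (1:ENNReal) else 0) := by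
    intro i
    rw [radMeasure, Measure.add_apply, Measure.smul_apply, Measure.smul_apply,
      Measure.dirac_apply' _ (hA i), Measure.dirac_apply' _ (hA i)]
    rw [Fintype.sum_bool]
    simp [Set.indicator_apply, mul_add]
  simp_rw [h3]
  rw [Finset.prod_mul_distrib, Finset.prod_const, h4]
  simp [rsig, ENNReal.inv_pow]
  congr

lemma integrable_dirac' {α : Type*} [MeasurableSpace α]
    {f : α → ℝ} (hf : Measurable f) (x : α) :
    Integrable f (Measure.dirac x) := by
  refine ⟨hf.stronglyMeasurable.aestronglyMeasurable, ?_⟩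
  rw [HasFiniteIntegral, lintegral_dirac' _ hf.enorm]
  exact ENNReal.coe_lt_top

open Classical in
lemma integral_radPi {d : ℕ} {G : (Fin d → ℝ) → ℝ} (hG : Continuous G) :
    ∫ a, G a ∂ radPi d = ((2:ℝ) ^ d)⁻¹ * ∑ s : Fin d → Bool, G (rsig s) := by
  rw [radPi_eq, integral_smul_measure,
    integral_finset_sum_measure (fun s _ => integrable_dirac' hG.measurable _)]
  simp_rw [integral_dirac' _ _ hG.stronglyMeasurable]
  rw [smul_eq_mul]
  congr 1
  rw [ENNReal.toReal_inv]
  norm_num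

open Classical in
lemma radPi_apply {d : ℕ} {A : Set (Fin d → ℝ)} (hA : MeasurableSet A) :
    radPi d A = ((2:ENNReal) ^ d)⁻¹ *
      ((Finset.univ.filter fun s : Fin d → Bool => rsig s ∈ A).card : ENNReal) := by
  rw [radPi_eq, Measure.smul_apply, Measure.finset_sum_apply]
  simp_rw [Measure.dirac_apply' _ hA, Set.indicator_apply, Pi.one_apply]
  rw [Finset.sum_boole]
  simp

def BD {d : ℕ} (F : (Fin d → Bool) → ℝ) (c : ℝ) : Prop :=
  ∀ (s : Fin d → Bool) (i : Fin d) (b : Bool), |F (Function.update s i b) - F s| ≤ c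

lemma mgf_bound : ∀ (d : ℕ) (F : (Fin d → Bool) → ℝ) (c : ℝ), 0 ≤ c → BD F c →
    ∑ s : Fin d → Bool, Real.exp (F s) ≤
      (2:ℝ) ^ d * Real.exp (((2:ℝ) ^ d)⁻¹ * (∑ s : Fin d → Bool, F s) + d * c ^ 2 / 8) := by
  intro d
  induction d with
  | zero =>
    intro F c hc hF
    rw [Fintype.sum_unique, Fintype.sum_unique]
    norm_num
  | succ d ih =>
    intro F c hc hF
    set G : Bool → (Fin d → Bool) → ℝ := fun b s => F (Fin.cons b s) with hG
    set g : (Fin d → Bool) → ℝ := fun s => (G true s + G false s) / 2 with hg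
    have hre : ∀ φ : (Fin (d+1) → Bool) → ℝ,
        ∑ s : Fin (d+1) → Bool, φ s =
          ∑ s : Fin d → Bool, (φ (Fin.cons true s) + φ (Fin.cons false s)) := by
      intro φ
      rw [← Equiv.sum_comp (Fin.consEquiv fun _ => Bool) φ, Fintype.sum_prod_type,
        Fintype.sum_bool]
      rw [← Finset.sum_add_distrib]
      rfl
    have key : ∀ s : Fin d → Bool,
        Real.exp (G true s) + Real.exp (G false s) ≤
          2 * Real.exp (c ^ 2 / 8) * Real.exp (g s) := by
      intro s
      set a : ℝ := (G true s - G false s) / 2 with ha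
      have h1 : G true s = g s + a := by rw [hg, ha]; ring
      have h2 : G false s = g s - a := by rw [hg, ha]; ring
      have habs : |2 * a| ≤ c := by
        have := hF (Fin.cons false s) 0 true
        rw [Fin.update_cons_zero] at this
        have e : 2 * a = F (Fin.cons true s) - F (Fin.cons false s) := by
          rw [ha, hG]; ring
        rwa [e]
      calc Real.exp (G true s) + Real.exp (G false s)
          = Real.exp (g s) * (2 * Real.cosh a) := by
            rw [h1, h2, Real.cosh_eq, sub_eq_add_neg, Real.exp_add, Real.exp_add]; ring
        _ ≤ Real.exp (g s) * (2 * Real.exp (a ^ 2 / 2)) := by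
            have := Real.cosh_le_exp_half_sq a
            nlinarith [Real.exp_pos (g s)]
        _ ≤ 2 * Real.exp (c ^ 2 / 8) * Real.exp (g s) := by
            have h4 : a ^ 2 / 2 ≤ c ^ 2 / 8 := by
              have hc2 := abs_le.1 habs
              nlinarith
            have := Real.exp_le_exp.2 h4
            nlinarith [Real.exp_pos (g s), Real.exp_pos (a ^ 2 / 2)]
    have hgBD : BD g c := by
      intro s i b
      have h1 := hF (Fin.cons true s) i.succ b
      have h2 := hF (Fin.cons false s) i.succ b
      rw [← Fin.cons_update] at h1 h2
      have e : g (Function.update s i b) - g s =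
          ((G true (Function.update s i b) - G true s) +
           (G false (Function.update s i b) - G false s)) / 2 := by rw [hg]; ring
      rw [e, abs_div, abs_of_nonneg (by norm_num : (0:ℝ) ≤ 2)]
      have h3 := abs_add_le (G true (Function.update s i b) - G true s)
        (G false (Function.update s i b) - G false s)
      have h4 := abs_sub_abs_le_abs_sub (G true (Function.update s i b)) (G true s)
      have e1 : |G true (Function.update s i b) - G true s| ≤ c := h1
      have e2 : |G false (Function.update s i b) - G false s| ≤ c := h2
      linarith
    have hsum : ∑ s : Fin d → Bool, g s = 2⁻¹ * ∑ s : Fin (d+1) → Bool, F s := by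
      rw [hre F, Finset.mul_sum]
      refine Finset.sum_congr rfl fun s _ => ?_
      rw [hg]; simp only [hG]; ring
    calc ∑ s : Fin (d+1) → Bool, Real.exp (F s)
        = ∑ s : Fin d → Bool, (Real.exp (G true s) + Real.exp (G false s)) := hre _
      _ ≤ ∑ s : Fin d → Bool, 2 * Real.exp (c ^ 2 / 8) * Real.exp (g s) :=
          Finset.sum_le_sum fun s _ => key s
      _ = 2 * Real.exp (c ^ 2 / 8) * ∑ s : Fin d → Bool, Real.exp (g s) := by
          rw [Finset.mul_sum]
      _ ≤ 2 * Real.exp (c ^ 2 / 8) *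
            ((2:ℝ) ^ d * Real.exp (((2:ℝ) ^ d)⁻¹ * (∑ s : Fin d → Bool, g s) + d * c ^ 2 / 8)) := by
          have h5 := ih g c hc hgBD
          nlinarith [Real.exp_pos (c^2/8)]
      _ = (2:ℝ) ^ (d+1) * Real.exp (((2:ℝ) ^ (d+1))⁻¹ * (∑ s : Fin (d+1) → Bool, F s)
            + (↑(d+1) : ℝ) * c ^ 2 / 8) := by
          rw [hsum]
          have expeq : Real.exp (c ^ 2 / 8) *
              Real.exp (((2:ℝ) ^ d)⁻¹ * (2⁻¹ * ∑ s : Fin (d+1) → Bool, F s) + ↑d * c ^ 2 / 8)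
              = Real.exp (((2:ℝ) ^ (d+1))⁻¹ * (∑ s : Fin (d+1) → Bool, F s)
                  + (↑(d+1) : ℝ) * c ^ 2 / 8) := by
            rw [← Real.exp_add]
            congr 1
            push_cast
            rw [pow_succ]
            have h2d : ((2:ℝ) ^ d) ≠ 0 := by positivity
            field_simp
            ring
          rw [show (2:ℝ) * Real.exp (c ^ 2 / 8) *
              ((2:ℝ) ^ d * Real.exp (((2:ℝ) ^ d)⁻¹ * (2⁻¹ * ∑ s : Fin (d+1) → Bool, F s)
                + ↑d * c ^ 2 / 8))
              = (2:ℝ) ^ (d+1) * (Real.exp (c ^ 2 / 8) *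
                Real.exp (((2:ℝ) ^ d)⁻¹ * (2⁻¹ * ∑ s : Fin (d+1) → Bool, F s) + ↑d * c ^ 2 / 8))
            from by ring, expeq]

open Classical in
lemma tail_count (d : ℕ) (hd : 1 ≤ d) (F : (Fin d → Bool) → ℝ) (c t : ℝ)
    (hc : 0 < c) (ht : 0 < t) (hF : BD F c) :
    ((Finset.univ.filter fun s : Fin d → Bool =>
        ((2:ℝ) ^ d)⁻¹ * (∑ s : Fin d → Bool, F s) + t ≤ F s).card : ℝ) ≤
      (2:ℝ) ^ d * Real.exp (-2 * t ^ 2 / (d * c ^ 2)) := by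
  have hdpos : (0:ℝ) < d := by exact_mod_cast hd
  set M : ℝ := ((2:ℝ) ^ d)⁻¹ * (∑ s : Fin d → Bool, F s) with hM
  set lam : ℝ := 4 * t / (d * c ^ 2) with hlam
  have hlampos : 0 < lam := by positivity
  set F' : (Fin d → Bool) → ℝ := fun s => lam * (F s - M) with hF'
  have hBD' : BD F' (lam * c) := by
    intro s i b
    have := hF s i b
    rw [hF']
    have e : lam * (F (Function.update s i b) - M) - lam * (F s - M)
        = lam * (F (Function.update s i b) - F s) := by ring
    rw [e, abs_mul, abs_of_pos hlampos]
    exact mul_le_mul_of_nonneg_left this hlampos.le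
  have hsum0 : ∑ s : Fin d → Bool, F' s = 0 := by
    have hcard : (Finset.univ : Finset (Fin d → Bool)).card = 2 ^ d := by
      simp [Fintype.card_fun]
    rw [hF', ← Finset.mul_sum, Finset.sum_sub_distrib, Finset.sum_const, hcard, hM,
      nsmul_eq_mul]
    have h2 : ((2:ℝ) ^ d) ≠ 0 := by positivity
    have e : ((2:ℝ)^d : ℝ) * (((2:ℝ) ^ d)⁻¹ * ∑ s : Fin d → Bool, F s)
        = ∑ s : Fin d → Bool, F s := by field_simp
    push_cast
    rw [e, sub_self, mul_zero]
  have hmgf := mgf_bound d F' (lam * c) (by positivity) hBD'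
  rw [hsum0, mul_zero, zero_add] at hmgf
  have hcount : ((Finset.univ.filter fun s : Fin d → Bool => M + t ≤ F s).card : ℝ)
      * Real.exp (lam * t) ≤ ∑ s : Fin d → Bool, Real.exp (F' s) := by
    have h1 : ((Finset.univ.filter fun s : Fin d → Bool => M + t ≤ F s).card : ℝ)
        * Real.exp (lam * t)
        = ∑ s ∈ Finset.univ.filter fun s : Fin d → Bool => M + t ≤ F s,
            Real.exp (lam * t) := by
      rw [Finset.sum_const, nsmul_eq_mul]
    rw [h1]
    refine le_trans (Finset.sum_le_sum fun s hs => ?_)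
      (Finset.sum_le_sum_of_subset_of_nonneg (Finset.filter_subset _ _)
        (fun s _ _ => (Real.exp_pos _).le))
    rw [Finset.mem_filter] at hs
    refine Real.exp_le_exp.2 ?_
    show lam * t ≤ lam * (F s - M)
    nlinarith [hs.2]
  have hexp : (d:ℝ) * (lam * c) ^ 2 / 8 - lam * t = -2 * t ^ 2 / (d * c ^ 2) := by
    rw [hlam]
    field_simp
    ring
  have h2 := le_trans hcount hmgf
  have h3 : ((Finset.univ.filter fun s : Fin d → Bool => M + t ≤ F s).card : ℝ)
      ≤ (2:ℝ) ^ d * Real.exp ((d:ℝ) * (lam * c) ^ 2 / 8 - lam * t) := by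
    rw [Real.exp_sub, ← mul_div_assoc, le_div_iff₀ (Real.exp_pos _)]
    exact h2
  rw [hexp] at h3
  exact h3

open Classical in
lemma sum_restrict {d m : ℕ} (emb : Fin m → Fin d) (hinj : Function.Injective emb)
    (g : (Fin m → Bool) → ℝ) :
    ∑ s : Fin d → Bool, g (s ∘ emb) = 2 ^ (d - m) * ∑ t : Fin m → Bool, g t := by
  set p : Fin d → Prop := fun x => x ∈ Set.range emb with hp
  set e1 := Equiv.piEquivPiSubtypeProd p (fun _ => Bool) with he1
  set eR : Fin m ≃ Set.range emb := Equiv.ofInjective emb hinj with heR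
  set ψ : ({x // p x} → Bool) ≃ (Fin m → Bool) :=
    Equiv.arrowCongr eR.symm (Equiv.refl Bool) with hψ
  have step1 : ∑ s : Fin d → Bool, g (s ∘ emb)
      = ∑ q : ({x // p x} → Bool) × ({x // ¬ p x} → Bool), g (e1.symm q ∘ emb) :=
    (Equiv.sum_comp e1.symm (fun s => g (s ∘ emb))).symm
  have step2 : ∀ q : ({x // p x} → Bool) × ({x // ¬ p x} → Bool),
      e1.symm q ∘ emb = ψ q.1 := by
    intro q
    funext j
    have hpj : p (emb j) := ⟨j, rfl⟩
    simp only [he1, Equiv.piEquivPiSubtypeProd, Equiv.coe_fn_symm_mk, Function.comp_apply]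
    rw [dif_pos hpj]
    simp only [hψ, Equiv.arrowCongr_apply, Function.comp_apply, Equiv.refl_apply,
      Equiv.symm_symm, heR, Equiv.ofInjective_apply]
    exact congrArg q.1 (Subtype.ext rfl)
  rw [step1]
  simp_rw [step2]
  have hcardp : Fintype.card {x // p x} = m :=
    ((Fintype.card_congr eR).symm.trans (Fintype.card_fin m))
  have hcard : Fintype.card ({x // ¬ p x} → Bool) = 2 ^ (d - m) := by
    rw [Fintype.card_fun, Fintype.card_bool, Fintype.card_subtype_compl, hcardp,
      Fintype.card_fin]
  have e2 : ∀ (y : {x // ¬ p x} → Bool),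
      ∑ u : {x // p x} → Bool, g (ψ (u, y).1) = ∑ t : Fin m → Bool, g t := by
    intro y; exact Equiv.sum_comp ψ g
  rw [Fintype.sum_prod_type_right]
  rw [Finset.sum_congr rfl fun y _ => e2 y]
  rw [Finset.sum_const, Finset.card_univ, hcard, nsmul_eq_mul]
  push_cast
  ring


/-- McDiarmid-type concentration of `‖Hz‖₁` for the Rademacher
Toeplitz matrix and a fixed unit vector `z`, around `S = n·E|∑ zᵢεᵢ|`:
`S - εn ≤ ‖Hz‖₁ ≤ S + εn` with probability at least
`1 - 2e^{-ε²n²/(2(n+m-1)m)}`. -/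
theorem stmt8 (m n : ℕ) (hm : 1 ≤ m) (hmn : m ≤ n)
    (z : Fin m → ℝ) (hz : l2 z = 1) (ε : ℝ) (hε : 0 < ε) :
    ENNReal.ofReal
        (1 - 2 * Real.exp (-(ε ^ 2 * (n : ℝ) ^ 2) / (2 * ((n : ℝ) + m - 1) * m))) ≤
      radPi (n + m - 1)
        {h | (n : ℝ) * (∫ a, |∑ i, z i * a i| ∂ radPi m) - ε * n ≤
              l1 ((toeplitz n m h).mulVec z) ∧
            l1 ((toeplitz n m h).mulVec z) ≤
              (n : ℝ) * (∫ a, |∑ i, z i * a i| ∂ radPi m) + ε * n} := by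
  classical
  set d := n + m - 1 with hd
  have hd1 : 1 ≤ d := by omega
  have hdm : m ≤ d := by omega
  set f : (Fin d → ℝ) → ℝ := fun h => l1 ((toeplitz n m h).mulVec z) with hf
  set S : ℝ := (n : ℝ) * (∫ a, |∑ i, z i * a i| ∂ radPi m) with hS
  set F : (Fin d → Bool) → ℝ := fun s => f (rsig s) with hF
  have hidx : ∀ (i : Fin n) (j : Fin m), (i:ℕ) + (j:ℕ) < d := by
    intro i j; have := i.2; have := j.2; omega
  set idx : Fin n → Fin m → Fin d := fun i j => ⟨(i:ℕ) + (j:ℕ), hidx i j⟩ with hidx2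
  have hfeq : ∀ h : Fin d → ℝ, f h = ∑ i : Fin n, |∑ j : Fin m, h (idx i j) * z j| := by
    intro h
    rfl
  -- continuity of f
  have hcont : Continuous f := by
    have : Continuous fun h : Fin d → ℝ => ∑ i : Fin n, |∑ j : Fin m, h (idx i j) * z j| := by
      refine continuous_finset_sum _ fun i _ => Continuous.abs ?_
      exact continuous_finset_sum _ fun j _ => (continuous_apply (idx i j)).mul continuous_const
    have e : f = fun h => ∑ i : Fin n, |∑ j : Fin m, h (idx i j) * z j| := funext hfeq
    rw [e]; exact this
  -- norm facts
  have hzsq : ∑ j : Fin m, z j ^ 2 = 1 := by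
    have h0 : 0 ≤ ∑ j : Fin m, z j ^ 2 := Finset.sum_nonneg fun j _ => sq_nonneg _
    have := hz
    rw [l2] at this
    nlinarith [Real.sq_sqrt h0]
  have hz1 : ∑ j : Fin m, |z j| ≤ Real.sqrt m := by
    have h1 : (∑ j : Fin m, |z j|) ^ 2 ≤ (m : ℝ) * ∑ j : Fin m, |z j| ^ 2 := by
      have := sq_sum_le_card_mul_sum_sq (s := (Finset.univ : Finset (Fin m)))
        (f := fun j => |z j|)
      simpa using this
    have h2 : ∑ j : Fin m, |z j| ^ 2 = 1 := by
      rw [← hzsq]; exact Finset.sum_congr rfl fun j _ => sq_abs _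
    rw [h2, mul_one] at h1
    have h3 : 0 ≤ ∑ j : Fin m, |z j| := Finset.sum_nonneg fun j _ => abs_nonneg _
    calc ∑ j : Fin m, |z j| = Real.sqrt ((∑ j : Fin m, |z j|) ^ 2) := (Real.sqrt_sq h3).symm
      _ ≤ Real.sqrt m := Real.sqrt_le_sqrt h1
  set c : ℝ := 2 * Real.sqrt m with hc
  have hcpos : 0 < c := by
    rw [hc]
    have : (0:ℝ) < Real.sqrt m := Real.sqrt_pos.2 (by exact_mod_cast hm)
    linarith
  -- bounded differences
  have hBD : BD F c := by
    intro s k b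
    set u : Fin d → Bool := Function.update s k b with hu
    have hΔ0 : ∀ x : Fin d, x ≠ k → rsig u x - rsig s x = 0 := by
      intro x hx
      have : u x = s x := Function.update_of_ne hx b s
      simp [rsig, this]
    have hΔ2 : ∀ x : Fin d, |rsig u x - rsig s x| ≤ 2 := by
      intro x
      simp only [rsig]
      split_ifs <;> norm_num
    have e1 : F (Function.update s k b) - F s
        = ∑ i : Fin n, (|∑ j : Fin m, rsig u (idx i j) * z j|
            - |∑ j : Fin m, rsig s (idx i j) * z j|) := by
      rw [Finset.sum_sub_distrib]
      have eF1 : F (Function.update s k b) = ∑ i : Fin n, |∑ j : Fin m, rsig u (idx i j) * z j| :=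
        hfeq (rsig u)
      have eF2 : F s = ∑ i : Fin n, |∑ j : Fin m, rsig s (idx i j) * z j| := hfeq (rsig s)
      rw [eF1, eF2]
    rw [e1]
    calc |∑ i : Fin n, (|∑ j : Fin m, rsig u (idx i j) * z j|
            - |∑ j : Fin m, rsig s (idx i j) * z j|)|
        ≤ ∑ i : Fin n, |(|∑ j : Fin m, rsig u (idx i j) * z j|
            - |∑ j : Fin m, rsig s (idx i j) * z j|)| := Finset.abs_sum_le_sum_abs _ _
      _ ≤ ∑ i : Fin n, ∑ j : Fin m, |rsig u (idx i j) - rsig s (idx i j)| * |z j| := by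
          refine Finset.sum_le_sum fun i _ => ?_
          refine le_trans (abs_abs_sub_abs_le_abs_sub _ _) ?_
          rw [← Finset.sum_sub_distrib]
          refine le_trans (Finset.abs_sum_le_sum_abs _ _) ?_
          refine Finset.sum_le_sum fun j _ => ?_
          rw [← sub_mul, abs_mul]
      _ = ∑ j : Fin m, |z j| * ∑ i : Fin n, |rsig u (idx i j) - rsig s (idx i j)| := by
          rw [Finset.sum_comm]
          refine Finset.sum_congr rfl fun j _ => ?_
          rw [Finset.mul_sum]
          refine Finset.sum_congr rfl fun i _ => mul_comm _ _
      _ ≤ ∑ j : Fin m, |z j| * 2 := by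
          refine Finset.sum_le_sum fun j _ => ?_
          refine mul_le_mul_of_nonneg_left ?_ (abs_nonneg _)
          calc ∑ i : Fin n, |rsig u (idx i j) - rsig s (idx i j)|
              ≤ ∑ i : Fin n, (if ((i:ℕ) + (j:ℕ) = (k:ℕ)) then (2:ℝ) else 0) := by
                refine Finset.sum_le_sum fun i _ => ?_
                by_cases hik : (i:ℕ) + (j:ℕ) = (k:ℕ)
                · rw [if_pos hik]; exact hΔ2 _
                · rw [if_neg hik]
                  have : idx i j ≠ k := by
                    intro hcon
                    exact hik (congrArg Fin.val hcon)
                  rw [hΔ0 _ this, abs_zero]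
            _ ≤ 2 := by
                rw [Finset.sum_ite, Finset.sum_const, Finset.sum_const_zero, add_zero,
                  nsmul_eq_mul]
                have hcard1 : (Finset.univ.filter
                    fun i : Fin n => (i:ℕ) + (j:ℕ) = (k:ℕ)).card ≤ 1 := by
                  refine Finset.card_le_one.2 fun a ha b hb => ?_
                  rw [Finset.mem_filter] at ha hb
                  exact Fin.ext (by omega)
                calc ((Finset.univ.filter
                    fun i : Fin n => (i:ℕ) + (j:ℕ) = (k:ℕ)).card : ℝ) * 2
                    ≤ 1 * 2 := by
                      refine mul_le_mul_of_nonneg_right ?_ (by norm_num)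
                      exact_mod_cast hcard1
                  _ = 2 := one_mul 2
      _ = 2 * ∑ j : Fin m, |z j| := by rw [← Finset.sum_mul]; ring
      _ ≤ c := by rw [hc]; nlinarith [hz1]
  -- mean
  set g : (Fin m → Bool) → ℝ := fun t => |∑ j : Fin m, (if t j then (1:ℝ) else -1) * z j|
    with hg
  have hmean : ((2:ℝ) ^ d)⁻¹ * (∑ s : Fin d → Bool, F s) = S := by
    have hinj : ∀ i : Fin n, Function.Injective (idx i) := by
      intro i a b hab
      have := congrArg Fin.val hab
      simp only [hidx2] at this
      exact Fin.ext (by omega)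
    have hres : ∀ i : Fin n, ∑ s : Fin d → Bool, |∑ j : Fin m, rsig s (idx i j) * z j|
        = 2 ^ (d - m) * ∑ t : Fin m → Bool, g t := by
      intro i
      exact sum_restrict (idx i) (hinj i) g
    have hswap : ∑ s : Fin d → Bool, F s
        = ∑ i : Fin n, ∑ s : Fin d → Bool, |∑ j : Fin m, rsig s (idx i j) * z j| := by
      rw [← Finset.sum_comm]
      exact Finset.sum_congr rfl fun s _ => hfeq (rsig s)
    have hsum1 : ∑ s : Fin d → Bool, F s = (n : ℝ) * (2 ^ (d - m) * ∑ t : Fin m → Bool, g t) := by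
      rw [hswap]
      rw [Finset.sum_congr rfl fun i _ => hres i]
      rw [Finset.sum_const, Finset.card_univ, Fintype.card_fin, nsmul_eq_mul]
    have hint : ∫ a, |∑ i, z i * a i| ∂ radPi m
        = ((2:ℝ) ^ m)⁻¹ * ∑ t : Fin m → Bool, |∑ i, z i * rsig t i| := by
      refine integral_radPi ?_
      exact (continuous_finset_sum _ fun i _ =>
        continuous_const.mul (continuous_apply i)).abs
    have hgt : ∑ t : Fin m → Bool, |∑ i, z i * rsig t i| = ∑ t : Fin m → Bool, g t := by
      refine Finset.sum_congr rfl fun t _ => ?_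
      rw [hg]
      congr 1
      exact Finset.sum_congr rfl fun j _ => mul_comm _ _
    have hpow : (2:ℝ) ^ (d - m) * 2 ^ m = 2 ^ d := by
      rw [← pow_add]
      congr 1
      omega
    rw [hsum1, hS, hint, hgt, ← hpow]
    have h2m : ((2:ℝ) ^ m) ≠ 0 := by positivity
    have h2dm : ((2:ℝ) ^ (d - m)) ≠ 0 := by positivity
    field_simp
  -- measurable set
  set A : Set (Fin d → ℝ) := {h | S - ε * n ≤ f h ∧ f h ≤ S + ε * n} with hA
  have hAm : MeasurableSet A := by
    have : A = f ⁻¹' (Set.Icc (S - ε * n) (S + ε * n)) := rfl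
    rw [this]
    exact hcont.measurable measurableSet_Icc
  -- tail bounds
  set t : ℝ := ε * n with ht
  have hn1 : 1 ≤ n := le_trans hm hmn
  have htpos : 0 < t := by
    rw [ht]
    have : (0:ℝ) < n := by exact_mod_cast hn1
    positivity
  have hup := tail_count d hd1 F c t hcpos htpos hBD
  rw [hmean] at hup
  have hBDneg : BD (fun s => -F s) c := by
    intro s i b
    have := hBD s i b
    rw [show -F (Function.update s i b) - -F s = -(F (Function.update s i b) - F s) by ring,
      abs_neg]
    exact this
  have hdown := tail_count d hd1 (fun s => -F s) c t hcpos htpos hBDneg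
  have hmean' : ((2:ℝ) ^ d)⁻¹ * (∑ s : Fin d → Bool, -F s) = -S := by
    rw [Finset.sum_neg_distrib, mul_neg, hmean]
  rw [hmean'] at hdown
  -- exponent equality
  have hdcast : ((d : ℕ) : ℝ) = (n : ℝ) + m - 1 := by
    rw [hd]
    have : ((n + m - 1 : ℕ) : ℝ) = ((n + m : ℕ) : ℝ) - 1 := by
      rw [Nat.cast_sub (by omega)]
      norm_num
    rw [this]
    push_cast
    ring
  have hc2 : c ^ 2 = 4 * m := by
    rw [hc, mul_pow, Real.sq_sqrt (Nat.cast_nonneg m)]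
    ring
  have hmpos : (0:ℝ) < m := by exact_mod_cast hm
  have hdpos' : (0:ℝ) < (n : ℝ) + m - 1 := by
    have : (1:ℝ) ≤ n := by exact_mod_cast hn1
    linarith
  have hexps : -2 * t ^ 2 / ((d:ℝ) * c ^ 2)
      = -(ε ^ 2 * (n : ℝ) ^ 2) / (2 * ((n : ℝ) + m - 1) * m) := by
    rw [ht, hc2, hdcast]
    field_simp
    ring
  rw [hexps] at hup hdown
  set E : ℝ := Real.exp (-(ε ^ 2 * (n : ℝ) ^ 2) / (2 * ((n : ℝ) + m - 1) * m)) with hE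
  -- abstract the tail filters
  have hupA : ∃ Bu : Finset (Fin d → Bool),
      (∀ s, s ∈ Bu ↔ S + t ≤ F s) ∧ ((Bu.card : ℝ) ≤ (2:ℝ) ^ d * E) :=
    ⟨_, fun s => by simp [Finset.mem_filter], hup⟩
  have hdownA : ∃ Bd : Finset (Fin d → Bool),
      (∀ s, s ∈ Bd ↔ -S + t ≤ -F s) ∧ ((Bd.card : ℝ) ≤ (2:ℝ) ^ d * E) :=
    ⟨_, fun s => by simp [Finset.mem_filter], hdown⟩
  obtain ⟨Bu, hBu, hBuc⟩ := hupA
  obtain ⟨Bd, hBd, hBdc⟩ := hdownA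
  -- main abstract bound
  have main : ∀ G : Finset (Fin d → Bool), (∀ s, s ∈ G ↔ rsig s ∈ A) →
      ENNReal.ofReal (1 - 2 * E) ≤ ((2:ENNReal) ^ d)⁻¹ * (G.card : ENNReal) := by
    intro G hG
    have hsub : (Finset.univ : Finset (Fin d → Bool)) ⊆ G ∪ Bu ∪ Bd := by
      intro s _
      by_cases h1 : S + t ≤ F s
      · exact Finset.mem_union_left _ (Finset.mem_union_right _ ((hBu s).2 h1))
      by_cases h2 : F s ≤ S - t
      · refine Finset.mem_union_right _ ((hBd s).2 (by linarith))
      · refine Finset.mem_union_left _ (Finset.mem_union_left _ ((hG s).2 ?_))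
        rw [hA]
        constructor
        · linarith
        · linarith
    have hcardsub : (2:ℝ) ^ d ≤ (G.card : ℝ) + Bu.card + Bd.card := by
      have h1 : (Finset.univ : Finset (Fin d → Bool)).card ≤ (G ∪ Bu ∪ Bd).card :=
        Finset.card_le_card hsub
      have h2 : (G ∪ Bu ∪ Bd).card ≤ G.card + Bu.card + Bd.card :=
        le_trans (Finset.card_union_le _ _)
          (Nat.add_le_add_right (Finset.card_union_le _ _) _)
      have h3 : (Finset.univ : Finset (Fin d → Bool)).card = 2 ^ d := by
        simp [Fintype.card_fun]
      have := le_trans (h3 ▸ h1) h2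
      exact_mod_cast this
    have hreal : 1 - 2 * E ≤ ((2:ℝ) ^ d)⁻¹ * (G.card : ℝ) := by
      have h2dpos : (0:ℝ) < 2 ^ d := by positivity
      have h4 : (2:ℝ) ^ d * (1 - 2 * E) ≤ (G.card : ℝ) := by nlinarith
      calc 1 - 2 * E = ((2:ℝ) ^ d)⁻¹ * ((2:ℝ) ^ d * (1 - 2 * E)) := by
            field_simp
        _ ≤ ((2:ℝ) ^ d)⁻¹ * (G.card : ℝ) :=
            mul_le_mul_of_nonneg_left h4 (by positivity)
    have hconv : ((2:ENNReal) ^ d)⁻¹ * (G.card : ENNReal)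
        = ENNReal.ofReal (((2:ℝ) ^ d)⁻¹ * (G.card : ℝ)) := by
      rw [ENNReal.ofReal_mul (by positivity), ENNReal.ofReal_inv_of_pos (by positivity),
        ENNReal.ofReal_pow (by norm_num), ENNReal.ofReal_natCast]
      norm_num
    rw [hconv]
    exact ENNReal.ofReal_le_ofReal hreal
  have hgoal := radPi_apply hAm
  rw [hgoal]
  exact main _ (fun s => by simp [Finset.mem_filter])
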